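/- For all constants γ > 0 and c > 0 one has sup_{n ≥ 3} Σ_{k=⌈(log n)^7⌉}^{n} n^{γ·(n−k)/n} · exp( −c·( (min(k+1, n−k+1))^{1/6} − 1 ) ) < ∞. -/

import Mathlib

open Real Finset
set_option maxHeartbeats 1000000

lemma aux_sum_inv_sq (n : ℕ) :
    ∑ j ∈ Finset.range n, (1:ℝ)/((j:ℝ)+1)^2 ≤ 2 := by
  have h : ∀ m : ℕ, ∑ j ∈ Finset.range m, (1:ℝ)/((j:ℝ)+1)^2 ≤ 2 - 2/((m:ℝ)+1) := by
    intro m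
    induction m with
    | zero => norm_num
    | succ m ih =>
      rw [Finset.sum_range_succ]
      have h1 : (0:ℝ) < (m:ℝ)+1 := by positivity
      have h2 : (0:ℝ) < (m:ℝ)+2 := by positivity
      have key : (1:ℝ)/((m:ℝ)+1)^2 ≤ 2/((m:ℝ)+1) - 2/((m:ℝ)+2) := by
        rw [div_sub_div _ _ (ne_of_gt h1) (ne_of_gt h2), div_le_div_iff₀ (by positivity) (by positivity)]
        nlinarith
      push_cast
      have e : ((m:ℝ)+1+1) = (m:ℝ)+2 := by ring
      rw [e]
      linarith
  have := h n
  have h0 : (0:ℝ) ≤ 2/((n:ℝ)+1) := by positivity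
  linarith

lemma aux_pow12 {y : ℝ} (hy : 0 ≤ y) : (y/12)^12 ≤ Real.exp y := by
  have h1 : y/12 ≤ Real.exp (y/12) := by linarith [Real.add_one_le_exp (y/12)]
  have h2 : (y/12)^12 ≤ (Real.exp (y/12))^12 := pow_le_pow_left₀ (by positivity) h1 12
  calc (y/12)^12 ≤ (Real.exp (y/12))^12 := h2
    _ = Real.exp y := by rw [← Real.exp_nat_mul]; congr 1; push_cast; ring

lemma aux_decay {c' : ℝ} (hc' : 0 < c') {a : ℝ} (ha : 0 ≤ a) :
    Real.exp (-(c' * (a+1) ^ ((1:ℝ)/6))) ≤ (12/c')^12 / (a+1)^2 := by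
  have ha1 : (0:ℝ) < a + 1 := by linarith
  have hr : (0:ℝ) < (a+1) ^ ((1:ℝ)/6) := Real.rpow_pos_of_pos ha1 _
  have hy : (0:ℝ) < c' * (a+1) ^ ((1:ℝ)/6) := by positivity
  have h12 : ((a+1) ^ ((1:ℝ)/6))^12 = (a+1)^2 := by
    rw [← Real.rpow_natCast ((a+1) ^ ((1:ℝ)/6)) 12, ← Real.rpow_mul ha1.le]
    norm_num
  have key := aux_pow12 hy.le
  have hne : Real.exp (-(c' * (a+1) ^ ((1:ℝ)/6))) = 1 / Real.exp (c' * (a+1) ^ ((1:ℝ)/6)) := by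
    rw [Real.exp_neg]; exact (one_div _).symm

  rw [hne, div_le_div_iff₀ (Real.exp_pos _) (by positivity)]
  have h3 : (c' * (a+1) ^ ((1:ℝ)/6) / 12)^12 = (c'/12)^12 * (a+1)^2 := by
    rw [← h12]; ring
  calc (1:ℝ) * (a+1)^2 = ((12/c')^12 * (c'/12)^12) * (a+1)^2 := by
        rw [← mul_pow]; field_simp
    _ = (12/c')^12 * ((c'/12)^12 * (a+1)^2) := by ring
    _ ≤ (12/c')^12 * Real.exp (c' * (a+1) ^ ((1:ℝ)/6)) := by
        apply mul_le_mul_of_nonneg_left _ (by positivity)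
        rw [← h3]; exact key


lemma aux_key (γ c' : ℝ) (hγ : 0 < γ) (hc' : 0 < c') (n k : ℕ) (hn : 3 ≤ n)
    (hk1 : ⌈Real.log n ^ 7⌉₊ ≤ k) (hk2 : k ≤ n) :
    Real.log n * (γ * ((n:ℝ) - (k:ℝ)) / (n:ℝ)) ≤
      c' * (min ((k:ℝ)+1) ((n:ℝ)-(k:ℝ)+1)) ^ ((1:ℝ)/6) + (γ + 36*γ^2/c' + γ*(γ/c')^6) := by
  have hn3 : (3:ℝ) ≤ (n:ℝ) := by exact_mod_cast hn
  have hn0 : (0:ℝ) < (n:ℝ) := by linarith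
  set t := Real.log n with ht
  have ht1 : 1 ≤ t := by
    have h3 : Real.exp 1 ≤ 3 := by
      have := Real.exp_one_lt_d9; linarith
    have : (1:ℝ) ≤ Real.log 3 := (Real.le_log_iff_exp_le (by norm_num)).mpr h3
    calc (1:ℝ) ≤ Real.log 3 := this
      _ ≤ t := Real.log_le_log (by norm_num) hn3
  have ht0 : 0 ≤ t := by linarith
  clear_value t
  set m := (n:ℝ) - (k:ℝ) with hm
  have hm0 : 0 ≤ m := by
    have : (k:ℝ) ≤ (n:ℝ) := by exact_mod_cast hk2
    rw [hm]; linarith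
  have hmn : m ≤ (n:ℝ) := by
    have : (0:ℝ) ≤ (k:ℝ) := Nat.cast_nonneg k
    rw [hm]; linarith
  clear_value m
  have hCrest1 : 0 ≤ 36*γ^2/c' := by positivity
  have hCrest2 : 0 ≤ γ*(γ/c')^6 := by positivity
  rcases le_total ((k:ℝ)+1) (m+1) with hmin|hmin
  · rw [min_eq_left hmin]
    -- bound: t * (γ m / n) ≤ γ t ≤ c' (k+1)^{1/6} + γ (γ/c')^6
    have hstep1 : t * (γ * m / n) ≤ γ * t := by
      have hd : γ * m / n ≤ γ := by
        rw [div_le_iff₀ hn0]; nlinarith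
      calc t * (γ * m / n) ≤ t * γ := mul_le_mul_of_nonneg_left hd ht0
        _ = γ * t := by ring
    have hk7 : t^7 ≤ (k:ℝ) + 1 := by
      have h1 : t^7 ≤ (⌈t^7⌉₊ : ℝ) := Nat.le_ceil _
      have h2 : ((⌈t^7⌉₊ : ℕ) : ℝ) ≤ (k:ℝ) := by exact_mod_cast hk1
      linarith
    have hrk : (t^7) ^ ((1:ℝ)/6) ≤ ((k:ℝ)+1) ^ ((1:ℝ)/6) :=
      Real.rpow_le_rpow (by positivity) hk7 (by norm_num)
    have e76 : (t^7) ^ ((1:ℝ)/6) = t ^ ((7:ℝ)/6) := by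
      rw [← Real.rpow_natCast t 7, ← Real.rpow_mul ht0]
      norm_num
    have hγt : γ * t ≤ c' * t ^ ((7:ℝ)/6) + γ*(γ/c')^6 := by
      by_cases hct : (γ/c')^6 ≤ t
      · have h16 : γ/c' ≤ t ^ ((1:ℝ)/6) := by
          have h0 : (0:ℝ) ≤ γ/c' := by positivity
          have := Real.rpow_le_rpow (by positivity) hct (by norm_num : (0:ℝ) ≤ 1/6)
          have e : ((γ/c')^6) ^ ((1:ℝ)/6) = γ/c' := by
            rw [← Real.rpow_natCast (γ/c') 6, ← Real.rpow_mul h0]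
            norm_num
          linarith [e ▸ this]
        have e2 : t ^ ((7:ℝ)/6) = t * t ^ ((1:ℝ)/6) := by
          rw [show (7:ℝ)/6 = 1 + 1/6 by norm_num, Real.rpow_add (by linarith : (0:ℝ) < t), Real.rpow_one]
        have h3 : c' * t * (γ/c') ≤ c' * t * t ^ ((1:ℝ)/6) :=
          mul_le_mul_of_nonneg_left h16 (by positivity)
        have h4 : c' * t * (γ/c') = γ * t := by field_simp
        have h5 : 0 ≤ γ*(γ/c')^6 := hCrest2
        rw [e2]; nlinarith
      · push_neg at hct
        have h6 : γ * t ≤ γ * (γ/c')^6 := mul_le_mul_of_nonneg_left hct.le hγ.le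
        have h7 : 0 ≤ c' * t ^ ((7:ℝ)/6) := by positivity
        linarith
    have hck : c' * (t^7) ^ ((1:ℝ)/6) ≤ c' * ((k:ℝ)+1) ^ ((1:ℝ)/6) :=
      mul_le_mul_of_nonneg_left hrk hc'.le
    rw [e76] at hck
    linarith
  · rw [min_eq_right hmin]
    by_cases hm1 : m ≤ 1
    · have htn : t / n ≤ 1 := by
        rw [div_le_one hn0]
        have := Real.log_le_sub_one_of_pos hn0
        linarith
      have e : t * (γ * m / n) = γ * (t/n * m) := by ring
      have h1 : t/n * m ≤ 1 := by
        have h0 : 0 ≤ t/n := by positivity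
        calc t/n * m ≤ 1 * 1 := mul_le_mul htn hm1 hm0 (by norm_num)
          _ = 1 := by norm_num
      have h2 : γ * (t/n * m) ≤ γ * 1 := mul_le_mul_of_nonneg_left h1 hγ.le
      have h3 : 0 ≤ c' * (m+1) ^ ((1:ℝ)/6) := by positivity
      rw [e]; linarith
    · push_neg at hm1
      have hmpos : (0:ℝ) < m := by linarith
      have hlog : t ≤ 12 * (n:ℝ) ^ ((1:ℝ)/12) := by
        have h := Real.log_le_rpow_div (Nat.cast_nonneg n) (by norm_num : (0:ℝ) < 1/12)
        calc t ≤ (n:ℝ) ^ ((1:ℝ)/12) / (1/12) := ht ▸ h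
          _ = 12 * (n:ℝ) ^ ((1:ℝ)/12) := by ring
      have hstep1 : t * (γ * m / n) ≤ 12 * (n:ℝ) ^ ((1:ℝ)/12) * (γ * m / n) :=
        mul_le_mul_of_nonneg_right hlog (by positivity)
      have e1 : 12 * (n:ℝ) ^ ((1:ℝ)/12) * (γ * m / n) = 12 * γ * (m * (n:ℝ) ^ ((1:ℝ)/12) / n) := by
        ring
      -- m * n^{1/12} ≤ m^{1/12} * n
      have em : m ^ ((1:ℝ)/12) * m ^ ((11:ℝ)/12) = m := by
        rw [← Real.rpow_add hmpos, show (1:ℝ)/12 + 11/12 = 1 by norm_num, Real.rpow_one]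
      have en : (n:ℝ) ^ ((11:ℝ)/12) * (n:ℝ) ^ ((1:ℝ)/12) = (n:ℝ) := by
        rw [← Real.rpow_add hn0, show (11:ℝ)/12 + 1/12 = 1 by norm_num, Real.rpow_one]
      have hm11 : m ^ ((11:ℝ)/12) ≤ (n:ℝ) ^ ((11:ℝ)/12) :=
        Real.rpow_le_rpow hm0 hmn (by norm_num)
      have key2 : m * (n:ℝ) ^ ((1:ℝ)/12) ≤ m ^ ((1:ℝ)/12) * (n:ℝ) := by
        calc m * (n:ℝ) ^ ((1:ℝ)/12)
            = (m ^ ((1:ℝ)/12) * m ^ ((11:ℝ)/12)) * (n:ℝ) ^ ((1:ℝ)/12) := by rw [em]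
          _ ≤ (m ^ ((1:ℝ)/12) * (n:ℝ) ^ ((11:ℝ)/12)) * (n:ℝ) ^ ((1:ℝ)/12) := by
              have h0 : (0:ℝ) ≤ m ^ ((1:ℝ)/12) := by positivity
              have h1 : (0:ℝ) ≤ (n:ℝ) ^ ((1:ℝ)/12) := by positivity
              exact mul_le_mul_of_nonneg_right (mul_le_mul_of_nonneg_left hm11 h0) h1
          _ = m ^ ((1:ℝ)/12) * ((n:ℝ) ^ ((11:ℝ)/12) * (n:ℝ) ^ ((1:ℝ)/12)) := by ring
          _ = m ^ ((1:ℝ)/12) * (n:ℝ) := by rw [en]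
      have hfrac : m * (n:ℝ) ^ ((1:ℝ)/12) / n ≤ m ^ ((1:ℝ)/12) := by
        rw [div_le_iff₀ hn0]
        linarith
      set s := m ^ ((1:ℝ)/12) with hs
      have hs0 : 0 ≤ s := by positivity
      clear_value s
      have hs2 : s * s = m ^ ((1:ℝ)/6) := by
        rw [hs, ← Real.rpow_add hmpos]; norm_num
      have hs6 : m ^ ((1:ℝ)/6) ≤ (m+1) ^ ((1:ℝ)/6) :=
        Real.rpow_le_rpow hm0 (by linarith) (by norm_num)
      have hq : 12 * γ * s ≤ c' * (s * s) + 36*γ^2/c' := by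
        have e : 36*γ^2/c'*c' = 36*γ^2 := by field_simp
        have q1 : (12*γ*s)*c' ≤ (c' * (s * s) + 36*γ^2/c')*c' := by
          rw [add_mul, e]
          nlinarith [sq_nonneg (c' * s - 6*γ)]
        exact le_of_mul_le_mul_right q1 hc'
      have hstep2 : 12 * γ * (m * (n:ℝ) ^ ((1:ℝ)/12) / n) ≤ 12 * γ * s :=
        mul_le_mul_of_nonneg_left hfrac (by positivity)
      have hcs : c' * (m ^ ((1:ℝ)/6)) ≤ c' * ((m+1) ^ ((1:ℝ)/6)) :=
        mul_le_mul_of_nonneg_left hs6 hc'.le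
      rw [e1] at hstep1
      have hq' : 12 * γ * s ≤ c' * (m ^ ((1:ℝ)/6)) + 36*γ^2/c' := by
        rw [← hs2]; exact hq
      linarith only [hstep1, hstep2, hq', hcs, hCrest2, hγ.le]


lemma aux_term (γ c : ℝ) (hγ : 0 < γ) (hc : 0 < c) (n k : ℕ) (hn : 3 ≤ n)
    (hk1 : ⌈Real.log n ^ 7⌉₊ ≤ k) (hk2 : k ≤ n) :
    (n : ℝ) ^ (γ * ((n : ℝ) - (k : ℝ)) / (n : ℝ)) *
        Real.exp (-c * ((min ((k : ℝ) + 1) ((n : ℝ) - (k : ℝ) + 1)) ^ ((1 : ℝ) / 6) - 1))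
      ≤ Real.exp ((γ + 36*γ^2/(c/2) + γ*(γ/(c/2))^6) + c) *
        ((12/(c/2))^12/((k:ℝ)+1)^2 + (12/(c/2))^12/(((n-k:ℕ):ℝ)+1)^2) := by
  have hc' : (0:ℝ) < c/2 := by linarith
  have hn0 : (0:ℝ) < (n:ℝ) := by positivity
  have hkn : (k:ℝ) ≤ (n:ℝ) := by exact_mod_cast hk2
  set X := (min ((k : ℝ) + 1) ((n : ℝ) - (k : ℝ) + 1)) ^ ((1 : ℝ) / 6) with hX
  set C := γ + 36*γ^2/(c/2) + γ*(γ/(c/2))^6 with hC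
  have hkey : Real.log n * (γ * ((n:ℝ) - (k:ℝ)) / (n:ℝ)) ≤ c/2 * X + C :=
    aux_key γ (c/2) hγ hc' n k hn hk1 hk2
  have e1 : (n : ℝ) ^ (γ * ((n : ℝ) - (k : ℝ)) / (n : ℝ)) *
      Real.exp (-c * (X - 1)) =
      Real.exp (Real.log n * (γ * ((n:ℝ) - (k:ℝ)) / (n:ℝ)) + (-c * (X - 1))) := by
    rw [Real.rpow_def_of_pos hn0, Real.exp_add]
  have e2 : Real.exp (Real.log n * (γ * ((n:ℝ) - (k:ℝ)) / (n:ℝ)) + (-c * (X - 1))) ≤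
      Real.exp (C + c) * Real.exp (-(c/2 * X)) := by
    rw [← Real.exp_add]
    apply Real.exp_le_exp.mpr
    linarith
  -- now bound exp(-(c/2 * X))
  have hdX : Real.exp (-(c/2 * X)) ≤
      (12/(c/2))^12/((k:ℝ)+1)^2 + (12/(c/2))^12/(((n-k:ℕ):ℝ)+1)^2 := by
    have hcast : ((n-k:ℕ):ℝ) = (n:ℝ) - (k:ℝ) := by
      push_cast [Nat.cast_sub hk2]; ring
    rcases le_total ((k:ℝ) + 1) ((n:ℝ) - (k:ℝ) + 1) with h|h
    · have hXe : X = ((k:ℝ)+1) ^ ((1:ℝ)/6) := by rw [hX, min_eq_left h]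
      have hb := aux_decay hc' (Nat.cast_nonneg k)
      have h2 : (0:ℝ) ≤ (12/(c/2))^12/(((n-k:ℕ):ℝ)+1)^2 := by positivity
      rw [hXe]
      linarith [hb]
    · have hXe : X = ((n:ℝ)-(k:ℝ)+1) ^ ((1:ℝ)/6) := by rw [hX, min_eq_right h]
      have hmnk : (0:ℝ) ≤ (n:ℝ) - (k:ℝ) := by linarith
      have hb := aux_decay hc' hmnk
      have h2 : (0:ℝ) ≤ (12/(c/2))^12/((k:ℝ)+1)^2 := by positivity
      rw [hXe, hcast]
      linarith [hb]
  calc (n : ℝ) ^ (γ * ((n : ℝ) - (k : ℝ)) / (n : ℝ)) * Real.exp (-c * (X - 1))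
      = Real.exp (Real.log n * (γ * ((n:ℝ) - (k:ℝ)) / (n:ℝ)) + (-c * (X - 1))) := e1
    _ ≤ Real.exp (C + c) * Real.exp (-(c/2 * X)) := e2
    _ ≤ Real.exp (C + c) *
        ((12/(c/2))^12/((k:ℝ)+1)^2 + (12/(c/2))^12/(((n-k:ℕ):ℝ)+1)^2) := by
        exact mul_le_mul_of_nonneg_left hdX (Real.exp_pos _).le

/-- The key analytic estimate in the second-moment bound (Proposition `EZn2`):
the sums `Σ_{k=⌈(log n)^7⌉}^{n} n^{γ (n-k) / n} exp(-c ((min(k+1, n-k+1))^{1/6} - 1))`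
are bounded uniformly in `n ≥ 3`. -/
theorem second_moment_tail_sum_bounded (γ c : ℝ) (hγ : 0 < γ) (hc : 0 < c) :
    ∃ B : ℝ, ∀ n : ℕ, 3 ≤ n →
      (∑ k ∈ Finset.Icc ⌈Real.log n ^ 7⌉₊ n,
          (n : ℝ) ^ (γ * ((n : ℝ) - (k : ℝ)) / (n : ℝ)) *
            Real.exp (-c *
              ((min ((k : ℝ) + 1) ((n : ℝ) - (k : ℝ) + 1)) ^ ((1 : ℝ) / 6) - 1)))
        ≤ B := by
  refine ⟨Real.exp ((γ + 36*γ^2/(c/2) + γ*(γ/(c/2))^6) + c) * (4 * (12/(c/2))^12), ?_⟩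
  intro n hn
  set E := Real.exp ((γ + 36*γ^2/(c/2) + γ*(γ/(c/2))^6) + c) with hE
  set D := (12/(c/2))^12 with hD
  have hE0 : 0 ≤ E := (Real.exp_pos _).le
  have hD0 : 0 ≤ D := by positivity
  have hsub : Finset.Icc ⌈Real.log n ^ 7⌉₊ n ⊆ Finset.range (n+1) := by
    intro k hk
    rw [Finset.mem_Icc] at hk
    rw [Finset.mem_range]
    omega
  have step1 : (∑ k ∈ Finset.Icc ⌈Real.log n ^ 7⌉₊ n,
          (n : ℝ) ^ (γ * ((n : ℝ) - (k : ℝ)) / (n : ℝ)) *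
            Real.exp (-c *
              ((min ((k : ℝ) + 1) ((n : ℝ) - (k : ℝ) + 1)) ^ ((1 : ℝ) / 6) - 1)))
      ≤ ∑ k ∈ Finset.Icc ⌈Real.log n ^ 7⌉₊ n,
          E * (D/((k:ℝ)+1)^2 + D/(((n-k:ℕ):ℝ)+1)^2) := by
    apply Finset.sum_le_sum
    intro k hk
    rw [Finset.mem_Icc] at hk
    exact aux_term γ c hγ hc n k hn hk.1 hk.2
  have step2 : (∑ k ∈ Finset.Icc ⌈Real.log n ^ 7⌉₊ n,
        E * (D/((k:ℝ)+1)^2 + D/(((n-k:ℕ):ℝ)+1)^2))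
      ≤ ∑ k ∈ Finset.range (n+1), E * (D/((k:ℝ)+1)^2 + D/(((n-k:ℕ):ℝ)+1)^2) := by
    apply Finset.sum_le_sum_of_subset_of_nonneg hsub
    intro k _ _
    positivity
  have hs1 : ∑ k ∈ Finset.range (n+1), (1:ℝ)/((k:ℝ)+1)^2 ≤ 2 := aux_sum_inv_sq (n+1)
  have hs2 : ∑ k ∈ Finset.range (n+1), (1:ℝ)/(((n-k:ℕ):ℝ)+1)^2 ≤ 2 := by
    have hrefl := Finset.sum_range_reflect (fun j => (1:ℝ)/((j:ℝ)+1)^2) (n+1)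
    simp only [Nat.add_sub_cancel] at hrefl
    calc ∑ k ∈ Finset.range (n+1), (1:ℝ)/(((n-k:ℕ):ℝ)+1)^2
        = ∑ j ∈ Finset.range (n+1), (1:ℝ)/((j:ℝ)+1)^2 := hrefl
      _ ≤ 2 := hs1
  have step3 : (∑ k ∈ Finset.range (n+1), E * (D/((k:ℝ)+1)^2 + D/(((n-k:ℕ):ℝ)+1)^2))
      ≤ E * (4 * D) := by
    have e : ∑ k ∈ Finset.range (n+1), E * (D/((k:ℝ)+1)^2 + D/(((n-k:ℕ):ℝ)+1)^2)
        = E * (D * (∑ k ∈ Finset.range (n+1), (1:ℝ)/((k:ℝ)+1)^2)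
             + D * (∑ k ∈ Finset.range (n+1), (1:ℝ)/(((n-k:ℕ):ℝ)+1)^2)) := by
      rw [Finset.mul_sum, Finset.mul_sum, ← Finset.sum_add_distrib, Finset.mul_sum]
      apply Finset.sum_congr rfl
      intro k _
      field_simp
    rw [e]
    have h1 : D * (∑ k ∈ Finset.range (n+1), (1:ℝ)/((k:ℝ)+1)^2) ≤ D * 2 :=
      mul_le_mul_of_nonneg_left hs1 hD0
    have h2 : D * (∑ k ∈ Finset.range (n+1), (1:ℝ)/(((n-k:ℕ):ℝ)+1)^2) ≤ D * 2 :=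
      mul_le_mul_of_nonneg_left hs2 hD0
    have : D * (∑ k ∈ Finset.range (n+1), (1:ℝ)/((k:ℝ)+1)^2)
         + D * (∑ k ∈ Finset.range (n+1), (1:ℝ)/(((n-k:ℕ):ℝ)+1)^2) ≤ 4 * D := by
      linarith
    exact mul_le_mul_of_nonneg_left this hE0
  linarith [step1, step2, step3]
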